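/- Let X ⊆ Y be nonempty finite sets of jobs (with sizes in (0, g(m)]), and let h0 := max{m(J) : J ∈ X} and k0 := max{m(J) : J ∈ Y}. Then for every k1 ∈ P(k0) there exists h1 ∈ T(k1) with h0 ∈ A_{h1} (so that h1 ∈ P(h0) and cn^X_{h1} is defined), and for every z0 ∈ T(h1): ∑_{z ∈ T(h1), z ≥ z0} cn^X_{h1}(z)·r(z) ≤ ∑_{z ∈ T(k1), z ≥ z0} cn^Y_{k1}(z)·r(z). -/
import Mathlib


open scoped Classical
open Finset MeasureTheory

namespace BSHM

noncomputable section

/-- The set of candidate parents of machine type `i`: types `j ∈ M` with `j > i`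
and a strictly smaller normalized cost rate per capacity unit. -/
def pset (m : ℕ) (g r : ℕ → ℝ) (i : ℕ) : Set ℕ :=
  {j | j ≤ m ∧ i < j ∧ r j / g j < r i / g i}

/-- The parent `p i` of machine type `i` (equal to `0` when the parent is undefined,
since any actual parent has index `≥ 2`). -/
def p (m : ℕ) (g r : ℕ → ℝ) (i : ℕ) : ℕ := sInf (pset m g r i)

/-- `pdef i` asserts that the parent of `i` is defined. -/
def pdef (m : ℕ) (g r : ℕ → ℝ) (i : ℕ) : Prop := (pset m g r i).Nonempty

/-- One step of the parent relation: `b` is the (defined) parent of `a`. -/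
def pstep (m : ℕ) (g r : ℕ → ℝ) (a b : ℕ) : Prop :=
  pdef m g r a ∧ b = p m g r a

/-- `P i`: the set consisting of `i` together with all of its iterated parents. -/
def P (m : ℕ) (g r : ℕ → ℝ) (i : ℕ) : Set ℕ :=
  {z | Relation.ReflTransGen (pstep m g r) i z}

/-- `A i`: the set of nodes in the tree rooted at `i`,
i.e. all `z ∈ M` having `i` as an ancestor (or equal to `i`). -/
def A (m : ℕ) (g r : ℕ → ℝ) (i : ℕ) : Set ℕ :=
  {z | 1 ≤ z ∧ z ≤ m ∧ i ∈ P m g r z}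

/-- `v i`: the lowest-indexed node in the tree rooted at `i`. -/
def v (m : ℕ) (g r : ℕ → ℝ) (i : ℕ) : ℕ := sInf (A m g r i)

/-- `y i`: the younger siblings of `i` (same parent status, smaller index). -/
def y (m : ℕ) (g r : ℕ → ℝ) (i : ℕ) : Set ℕ :=
  {z | 1 ≤ z ∧ z ≤ m ∧ z < i ∧ p m g r z = p m g r i}

/-- `esib i`: the elder siblings of `i`. -/
def esib (m : ℕ) (g r : ℕ → ℝ) (i : ℕ) : Set ℕ :=
  {z | 1 ≤ z ∧ z ≤ m ∧ i < z ∧ p m g r z = p m g r i}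

/-- `T k := {k} ∪ ⋃_{z ∈ P(k)} y(z)`. -/
def T (m : ℕ) (g r : ℕ → ℝ) (k : ℕ) : Set ℕ :=
  {k} ∪ ⋃ z ∈ P m g r k, y m g r z

/-- `T k` as a `Finset` (all relevant nodes lie in `{k} ∪ [1, m]`). -/
def TIcc (m : ℕ) (g r : ℕ → ℝ) (k : ℕ) : Finset ℕ :=
  (insert k (Finset.Icc 1 m)).filter (fun z => z ∈ T m g r k)

/-! ### Jobs and one-shot scheduling -/

variable {ι : Type*}

/-- The exact machine type of a job `J`: the least `z ∈ M` with `s J ≤ g z`. -/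
def mty (m : ℕ) (g : ℕ → ℝ) (s : ι → ℝ) (J : ι) : ℕ :=
  sInf {z | 1 ≤ z ∧ z ≤ m ∧ s J ≤ g z}

/-- Total size of a finite set of jobs. -/
def Ssum (s : ι → ℝ) (W : Finset ι) : ℝ := ∑ J ∈ W, s J

/-- `k0f X`: the highest-indexed exact machine type among the jobs of `X`. -/
def k0f (m : ℕ) (g : ℕ → ℝ) (s : ι → ℝ) (X : Finset ι) : ℕ :=
  X.sup (fun J => mty m g s J)

/-- `H z X`: the jobs of `X` whose exact machine type lies in the tree rooted at `z`. -/
def H (m : ℕ) (g r : ℕ → ℝ) (s : ι → ℝ) (z : ℕ) (X : Finset ι) : Finset ι :=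
  X.filter (fun J => mty m g s J ∈ A m g r z)

/-- `SH X z := S(H_z(X))`. -/
def SH (m : ℕ) (g r : ℕ → ℝ) (s : ι → ℝ) (X : Finset ι) (z : ℕ) : ℝ :=
  Ssum s (H m g r s z X)

/-- Feasibility of a machine configuration `w : M → ℕ` for the job set `X`. -/
def Feasible (m : ℕ) (g : ℕ → ℝ) (s : ι → ℝ) (X : Finset ι) (w : ℕ → ℕ) : Prop :=
  ∀ i, 1 ≤ i → i ≤ m →
    Ssum s (X.filter (fun J => i ≤ mty m g s J)) ≤ ∑ z ∈ Finset.Icc i m, (w z : ℝ) * g z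

/-- The cost of a machine configuration. -/
def cost (m : ℕ) (r : ℕ → ℝ) (w : ℕ → ℕ) : ℝ :=
  ∑ z ∈ Finset.Icc 1 m, (w z : ℝ) * r z

/-- The optimal one-shot scheduling cost for a job set `X`. -/
def OPT1 (m : ℕ) (g r : ℕ → ℝ) (s : ι → ℝ) (X : Finset ι) : ℝ :=
  sInf {c : ℝ | ∃ w : ℕ → ℕ, Feasible m g s X w ∧ c = cost m r w}

/-- The fractional machine configuration `cn_{z*}` for the job set `X`, with
highest-indexed machine type `zs`.  A node `i ∈ T(zs) \ {zs}` is the boundary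
type `i*` exactly when `∑_{z ∈ T(zs), z > i} S(H_z) ≤ cn(zs)·g(zs) <
∑_{z ∈ T(zs), z ≥ i} S(H_z)`; nodes above the boundary get `0`,
nodes below it get `S(H_i)/g_i`. -/
def cn (m : ℕ) (g r : ℕ → ℝ) (s : ι → ℝ) (X : Finset ι) (zs i : ℕ) : ℝ :=
  let B : ℝ := (⌈SH m g r s X zs / g zs⌉₊ : ℝ) * g zs
  let Sge : ℝ := ∑ z ∈ (TIcc m g r zs).filter (fun z => i ≤ z), SH m g r s X z
  let Sgt : ℝ := ∑ z ∈ (TIcc m g r zs).filter (fun z => i < z), SH m g r s X z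
  if i = zs then (⌈SH m g r s X zs / g zs⌉₊ : ℝ)
  else if i ∈ T m g r zs then
    (if Sgt ≤ B ∧ B < Sge then (Sge - B) / g i
     else if B < Sgt then SH m g r s X i / g i
     else 0)
  else 0

/-- `cn_{zs}` is decent: for every strict ancestor `zt` of `zs`, the total cost of
the machines of types in `T(zs) ∩ A(zt)` is at most the cost of one type-`zt` machine. -/
def decent (m : ℕ) (g r : ℕ → ℝ) (s : ι → ℝ) (X : Finset ι) (zs : ℕ) : Prop :=
  ∀ zt ∈ P m g r zs, zt ≠ zs →
    (∑ z ∈ (TIcc m g r zs).filter (fun z => z ∈ A m g r zt), cn m g r s X zs z * r z) ≤ r zt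

/-- `z⋄(X)`: the least `z* ∈ P(k0(X))` such that `cn_{z*}` is decent. -/
def zdia (m : ℕ) (g r : ℕ → ℝ) (s : ι → ℝ) (X : Finset ι) : ℕ :=
  sInf {zs | zs ∈ P m g r (k0f m g s X) ∧ decent m g r s X zs}

/-- The child of `zd` whose subtree contains node `k`. -/
def chil (m : ℕ) (g r : ℕ → ℝ) (zd k : ℕ) : ℕ :=
  sInf {i | p m g r i = zd ∧ k ∈ A m g r i}

/-- The node `i ∈ T(zd)` whose subtree contains node `k`. -/
def idxT (m : ℕ) (g r : ℕ → ℝ) (zd k : ℕ) : ℕ :=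
  sInf {i | i ∈ T m g r zd ∧ k ∈ A m g r i}

/-- The children `f(zd)` of node `zd`, as a `Finset`. -/
def fchFin (m : ℕ) (g r : ℕ → ℝ) (zd : ℕ) : Finset ℕ :=
  (Finset.Icc 1 m).filter (fun z => p m g r z = zd)

/-- The cost `r̃(X)(J)` charged to the job `J` of the job set `X`. -/
def charge (m : ℕ) (g r : ℕ → ℝ) (s : ι → ℝ) (X : Finset ι) (J : ι) : ℝ :=
  let zd := zdia m g r s X
  let ρ : ℕ → ℝ := fun i => r i / g i
  let Hh := X.filter (fun J' => mty m g s J' = zd)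
  let c : ℝ := Ssum s Hh * ρ zd + ∑ i ∈ fchFin m g r zd, SH m g r s X i * ρ i
  if mty m g s J ∈ A m g r zd then
    if g zd ≤ SH m g r s X zd then s J * ρ zd
    else if r zd < c then
      if mty m g s J = zd then s J * ρ zd
      else
        s J * (ρ (chil m g r zd (mty m g s J)) -
          (ρ (chil m g r zd (mty m g s J)) - ρ zd) *
            ((c - r zd) /
              (∑ i ∈ fchFin m g r zd, ∑ J' ∈ H m g r s i X, s J' * (ρ i - ρ zd))))
    else
      if mty m g s J = zd then s J * ρ zd * (1 + (r zd - c) / (Ssum s Hh * ρ zd))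
      else s J * ρ (chil m g r zd (mty m g s J))
  else s J * ρ (idxT m g r zd (mty m g s J))

end

end BSHM

namespace BSHM

/-! ### Auxiliary lemmas -/

open Relation

section structural

variable (m : ℕ) (g r : ℕ → ℝ)

lemma p_mem {i : ℕ} (h : pdef m g r i) : p m g r i ∈ pset m g r i :=
  Nat.sInf_mem h

lemma p_gt {i : ℕ} (h : pdef m g r i) : i < p m g r i :=
  (p_mem m g r h).2.1

lemma p_le_m {i : ℕ} (h : pdef m g r i) : p m g r i ≤ m :=
  (p_mem m g r h).1

lemma p_rho {i : ℕ} (h : pdef m g r i) :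
    r (p m g r i) / g (p m g r i) < r i / g i :=
  (p_mem m g r h).2.2

lemma p_min {i j : ℕ} (h : j ∈ pset m g r i) : p m g r i ≤ j :=
  Nat.sInf_le h

lemma p_eq_zero {i : ℕ} (h : ¬ pdef m g r i) : p m g r i = 0 := by
  rw [pdef, Set.not_nonempty_iff_eq_empty] at h
  rw [p, h, Nat.sInf_empty]

lemma P_self (i : ℕ) : i ∈ P m g r i := Relation.ReflTransGen.refl

lemma pdef_of_p_ne_zero {i : ℕ} (h : p m g r i ≠ 0) : pdef m g r i := by
  by_contra hc; exact h (p_eq_zero m g r hc)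

lemma le_of_mem_P {i z : ℕ} (h : z ∈ P m g r i) : i ≤ z := by
  induction h with
  | refl => exact le_refl _
  | tail hab hbc ih => exact ih.trans (hbc.2 ▸ (p_gt m g r hbc.1).le)

lemma le_m_of_mem_P {i z : ℕ} (him : i ≤ m) (h : z ∈ P m g r i) : z ≤ m := by
  induction h with
  | refl => exact him
  | tail hab hbc ih => exact hbc.2 ▸ (p_le_m m g r hbc.1)

lemma P_trans {i j k : ℕ} (h1 : j ∈ P m g r i) (h2 : k ∈ P m g r j) :
    k ∈ P m g r i := Relation.ReflTransGen.trans h1 h2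

lemma P_head {i z : ℕ} (h : pdef m g r i) (hz : z ∈ P m g r (p m g r i)) :
    z ∈ P m g r i := Relation.ReflTransGen.head ⟨h, rfl⟩ hz

lemma P_tail {i z : ℕ} (h : z ∈ P m g r i) (hz : pdef m g r z) :
    p m g r z ∈ P m g r i := Relation.ReflTransGen.tail h ⟨hz, rfl⟩

lemma P_cases {i z : ℕ} (h : z ∈ P m g r i) :
    z = i ∨ (pdef m g r i ∧ z ∈ P m g r (p m g r i)) := by
  rcases Relation.ReflTransGen.cases_head h with h | ⟨c, hc, hcz⟩
  · exact Or.inl h.symm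
  · exact Or.inr ⟨hc.1, hc.2 ▸ hcz⟩

lemma pset_gt_of_sib {z b : ℕ} (hpp : p m g r z = p m g r b) :
    ∀ q ∈ pset m g r z, b < q := by
  intro q hq
  have hdz : pdef m g r z := ⟨q, hq⟩
  have h1 : z < p m g r z := p_gt m g r hdz
  have h2 : p m g r z ≤ q := p_min m g r hq
  by_cases hb : pdef m g r b
  · have := p_gt m g r hb
    omega
  · have := p_eq_zero m g r hb
    omega

/-- Lemma O: "ordering" along ancestor chains. -/
lemma lt_of_chain {w b : ℕ} (h : b ∈ P m g r w) :
    ∀ z, z ≤ m → (∀ q ∈ pset m g r z, b < q) → z < b → z < w := by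
  induction h with
  | refl => intro z _ _ hz; exact hz
  | @tail c b' hwc hstep ih =>
    intro z hzm hq hzb
    obtain ⟨hc, rfl⟩ := hstep
    have hzc : z < c := by
      by_contra hcz
      push_neg at hcz
      have hrho : r (p m g r c) / g (p m g r c) < r z / g z := by
        rcases eq_or_lt_of_le hcz with h | h
        · rw [← h]; exact p_rho m g r hc
        · have hz_not : z ∉ pset m g r c := fun hmem =>
            absurd (p_min m g r hmem) (not_le.mpr hzb)
          have hnl : ¬ (r z / g z < r c / g c) := fun hrr => hz_not ⟨hzm, h, hrr⟩
          exact lt_of_lt_of_le (p_rho m g r hc) (not_lt.mp hnl)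
      have hmem : p m g r c ∈ pset m g r z := ⟨p_le_m m g r hc, hzb, hrho⟩
      exact absurd (hq _ hmem) (lt_irrefl _)
    exact ih z hzm (fun q hqm => (p_gt m g r hc).trans (hq q hqm)) hzc

lemma y_lt {z b w : ℕ} (hy : z ∈ y m g r b) (hb : b ∈ P m g r w) : z < w :=
  lt_of_chain m g r hb z hy.2.1 (pset_gt_of_sib m g r hy.2.2.2) hy.2.2.1

lemma mem_T_iff {k z : ℕ} :
    z ∈ T m g r k ↔ z = k ∨ ∃ b ∈ P m g r k, z ∈ y m g r b := by
  simp [T, Set.mem_union, Set.mem_singleton_iff]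

lemma T_self (k : ℕ) : k ∈ T m g r k := Or.inl rfl

lemma T_le {k z : ℕ} (h : z ∈ T m g r k) : z ≤ k := by
  rcases (mem_T_iff m g r).mp h with rfl | ⟨b, hbP, hy⟩
  · exact le_refl _
  · exact (y_lt m g r hy hbP).le

lemma T_bounds {k z : ℕ} (h : z ∈ T m g r k) (h1 : 1 ≤ k) (h2 : k ≤ m) :
    1 ≤ z ∧ z ≤ m := by
  rcases (mem_T_iff m g r).mp h with rfl | ⟨b, hbP, hy⟩
  · exact ⟨h1, h2⟩
  · exact ⟨hy.1, hy.2.1⟩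

lemma T_subset {k1 h1 : ℕ} (hT : h1 ∈ T m g r k1) : T m g r h1 ⊆ T m g r k1 := by
  intro z hz
  rcases (mem_T_iff m g r).mp hz with rfl | ⟨b, hbP, hy⟩
  · exact hT
  · rcases (mem_T_iff m g r).mp hT with rfl | ⟨a, haP, hya⟩
    · exact (mem_T_iff m g r).mpr (Or.inr ⟨b, hbP, hy⟩)
    · rcases P_cases m g r hbP with rfl | ⟨hd, hbP'⟩
      · -- b = h1 : z is a younger sibling of h1, hence of a
        exact (mem_T_iff m g r).mpr (Or.inr ⟨a, haP,
          ⟨hy.1, hy.2.1, lt_trans hy.2.2.1 hya.2.2.1, hy.2.2.2.trans hya.2.2.2⟩⟩)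
      · -- b is a strict ancestor of h1
        have hpa : pdef m g r a := by
          apply pdef_of_p_ne_zero
          have h1' : h1 < p m g r h1 := p_gt m g r hd
          have : p m g r a = p m g r h1 := hya.2.2.2.symm
          omega
        have hbPa : b ∈ P m g r a := by
          apply P_head m g r hpa
          rw [← hya.2.2.2]
          exact hbP'
        exact (mem_T_iff m g r).mpr (Or.inr ⟨b, P_trans m g r haP hbPa, hy⟩)

lemma rho_mono_T {k : ℕ} (hkm : k ≤ m) {z1 z2 : ℕ}
    (h1 : z1 ∈ T m g r k) (h2 : z2 ∈ T m g r k) (h12 : z1 < z2) :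
    r z1 / g z1 ≤ r z2 / g z2 := by
  by_contra hlt
  push_neg at hlt
  have hz2k : z2 ≤ k := T_le m g r h2
  rcases (mem_T_iff m g r).mp h1 with rfl | ⟨b, hbP, hy⟩
  · omega
  · have hmem : z2 ∈ pset m g r z1 := ⟨hz2k.trans hkm, h12, hlt⟩
    have hb1 := pset_gt_of_sib m g r hy.2.2.2 z2 hmem
    have hb2 := le_of_mem_P m g r hbP
    omega

lemma top_exists : ∀ n k, k ≤ m → m - k = n → ∃ a ∈ P m g r k, ¬ pdef m g r a := by
  intro n
  induction n using Nat.strong_induction_on with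
  | _ n ih =>
    intro k hkm hn
    by_cases h : pdef m g r k
    · have h1 : k < p m g r k := p_gt m g r h
      have h2 : p m g r k ≤ m := p_le_m m g r h
      obtain ⟨a, ha, hna⟩ := ih (m - p m g r k) (by omega) (p m g r k) h2 rfl
      exact ⟨a, P_head m g r h ha, hna⟩
    · exact ⟨k, P_self m g r k, h⟩

lemma cover : ∀ n w k, k - w = n → 1 ≤ w → w ≤ k → k ≤ m →
    ∃ z ∈ T m g r k, w ∈ A m g r z := by
  intro n
  induction n using Nat.strong_induction_on with
  | _ n ih =>
    intro w k hn hw hwk hkm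
    rcases eq_or_lt_of_le hwk with heq | hlt
    · subst heq
      exact ⟨w, T_self m g r w, ⟨hw, hkm, P_self m g r w⟩⟩
    · have hwm : w ≤ m := by omega
      by_cases hp : pdef m g r w ∧ p m g r w ≤ k
      · obtain ⟨hpd, hpk⟩ := hp
        have hwp : w < p m g r w := p_gt m g r hpd
        obtain ⟨z, hzT, hzA⟩ := ih (k - p m g r w) (by omega) (p m g r w) k rfl
          (by omega) hpk hkm
        exact ⟨z, hzT, ⟨hw, hwm,
          Relation.ReflTransGen.head ⟨hpd, rfl⟩ hzA.2.2⟩⟩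
      · suffices h : ∃ a ∈ P m g r k, p m g r a = p m g r w by
          obtain ⟨a, haP, hpa⟩ := h
          have hwa : w < a := lt_of_lt_of_le hlt (le_of_mem_P m g r haP)
          have hyT : w ∈ T m g r k := (mem_T_iff m g r).mpr
            (Or.inr ⟨a, haP, ⟨hw, hwm, hwa, hpa.symm⟩⟩)
          exact ⟨w, hyT, ⟨hw, hwm, P_self m g r w⟩⟩
        push_neg at hp
        by_cases hpd : pdef m g r w
        · have hq : k < p m g r w := hp hpd
          set F := (Finset.Icc k m).filter
            (fun a => a ∈ P m g r k ∧ a < p m g r w) with hF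
          have hkF : k ∈ F := by
            simp only [hF, Finset.mem_filter, Finset.mem_Icc]
            exact ⟨⟨le_refl _, hkm⟩, P_self m g r k, hq⟩
          have hFne : F.Nonempty := ⟨k, hkF⟩
          set a := F.max' hFne with ha
          have haF : a ∈ F := F.max'_mem hFne
          simp only [hF, Finset.mem_filter, Finset.mem_Icc] at haF
          obtain ⟨⟨hka, ham⟩, haP, haq⟩ := haF
          have hwa : w < a := lt_of_lt_of_le hlt hka
          have hanot : a ∉ pset m g r w := fun hmem =>
            absurd (p_min m g r hmem) (not_le.mpr haq)
          have hra : ¬ (r a / g a < r w / g w) := fun hrr => hanot ⟨ham, hwa, hrr⟩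
          have hmem : p m g r w ∈ pset m g r a :=
            ⟨p_le_m m g r hpd, haq, lt_of_lt_of_le (p_rho m g r hpd) (not_lt.mp hra)⟩
          have hpda : pdef m g r a := ⟨_, hmem⟩
          have hple : p m g r a ≤ p m g r w := p_min m g r hmem
          have hnlt : ¬ p m g r a < p m g r w := by
            intro hlt'
            have hgt := p_gt m g r hpda
            have hpaF : p m g r a ∈ F := by
              simp only [hF, Finset.mem_filter, Finset.mem_Icc]
              exact ⟨⟨by omega, p_le_m m g r hpda⟩, P_tail m g r haP hpda, hlt'⟩
            have := F.le_max' _ hpaF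
            omega
          exact ⟨a, haP, by omega⟩
        · obtain ⟨a, haP, hna⟩ := top_exists m g r (m - k) k hkm rfl
          exact ⟨a, haP, by rw [p_eq_zero m g r hna, p_eq_zero m g r hpd]⟩

end structural

section sums

variable {ι : Type*} (m : ℕ) (g r : ℕ → ℝ) (s : ι → ℝ)

lemma g_mono (hg : ∀ i j, 1 ≤ i → i < j → j ≤ m → g i < g j)
    {i j : ℕ} (h1 : 1 ≤ i) (hij : i ≤ j) (hjm : j ≤ m) : g i ≤ g j := by
  rcases eq_or_lt_of_le hij with rfl | h
  · exact le_refl _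
  · exact (hg i j h1 h hjm).le

lemma g_pos (hg1 : 0 < g 1) (hg : ∀ i j, 1 ≤ i → i < j → j ≤ m → g i < g j)
    {i : ℕ} (h1 : 1 ≤ i) (h2 : i ≤ m) : 0 < g i :=
  lt_of_lt_of_le hg1 (g_mono m g hg (le_refl 1) h1 h2)

lemma mty_spec {J : ι} (hm : 1 ≤ m) (h : s J ≤ g m) :
    1 ≤ mty m g s J ∧ mty m g s J ≤ m ∧ s J ≤ g (mty m g s J) :=
  Nat.sInf_mem (⟨m, hm, le_refl m, h⟩ : Set.Nonempty {z | 1 ≤ z ∧ z ≤ m ∧ s J ≤ g z})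

lemma mty_min {J : ι} {z : ℕ} (h1 : 1 ≤ z) (h2 : z ≤ m) (h3 : s J ≤ g z) :
    mty m g s J ≤ z := Nat.sInf_le ⟨h1, h2, h3⟩

lemma SH_nonneg {X : Finset ι} (hs : ∀ J ∈ X, 0 ≤ s J) (z : ℕ) :
    0 ≤ SH m g r s X z :=
  Finset.sum_nonneg (fun J hJ => hs J (Finset.mem_filter.mp hJ).1)

lemma SH_mono {X Y : Finset ι} (hXY : X ⊆ Y) (hs : ∀ J ∈ Y, 0 ≤ s J) (z : ℕ) :
    SH m g r s X z ≤ SH m g r s Y z :=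
  Finset.sum_le_sum_of_subset_of_nonneg
    (Finset.filter_subset_filter _ hXY)
    (fun J hJ _ => hs J (Finset.mem_filter.mp hJ).1)

lemma mem_TIcc {k z : ℕ} (h1 : 1 ≤ k) (h2 : k ≤ m) :
    z ∈ TIcc m g r k ↔ z ∈ T m g r k := by
  unfold TIcc
  simp only [Finset.mem_filter, Finset.mem_insert, Finset.mem_Icc]
  constructor
  · exact fun h => h.2
  · intro h
    refine ⟨?_, h⟩
    obtain ⟨hb1, hb2⟩ := T_bounds m g r h h1 h2
    exact Or.inr ⟨hb1, hb2⟩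

lemma mem_T_of_mem_TIcc {k z : ℕ} (h : z ∈ TIcc m g r k) : z ∈ T m g r k :=
  (Finset.mem_filter.mp h).2

lemma max_sub_eq (B x : ℝ) : max (x - B) 0 = max B x - B := by
  rcases le_total x B with h | h
  · rw [max_eq_right (by linarith : x - B ≤ 0), max_eq_left h, sub_self]
  · rw [max_eq_left (by linarith : (0:ℝ) ≤ x - B), max_eq_right h]

/-- Evaluation of suffix `cn·g` sums: they equal `max B (suffix SH sum)`. -/
lemma Gmax_aux {X : Finset ι} {zs : ℕ}
    (hg1 : 0 < g 1) (hg : ∀ i j, 1 ≤ i → i < j → j ≤ m → g i < g j)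
    (hs0 : ∀ J ∈ X, 0 ≤ s J)
    (h1 : 1 ≤ zs) (h2 : zs ≤ m) :
    ∀ n w, zs = w + n →
    ∑ z ∈ (TIcc m g r zs).filter (fun z => w ≤ z), cn m g r s X zs z * g z
      = max ((⌈SH m g r s X zs / g zs⌉₊ : ℝ) * g zs)
            (∑ z ∈ (TIcc m g r zs).filter (fun z => w ≤ z), SH m g r s X z) := by
  have hgzs : 0 < g zs := g_pos m g hg1 hg h1 h2
  have hSHB : SH m g r s X zs ≤ (⌈SH m g r s X zs / g zs⌉₊ : ℝ) * g zs := by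
    have h := Nat.le_ceil (SH m g r s X zs / g zs)
    rw [div_le_iff₀ hgzs] at h
    exact h
  intro n
  induction n with
  | zero =>
    intro w hw
    have hwzs : w = zs := by omega
    have hset : (TIcc m g r zs).filter (fun z => w ≤ z) = {zs} := by
      ext z
      simp only [Finset.mem_filter, Finset.mem_singleton]
      constructor
      · rintro ⟨hzT, hle⟩
        have := T_le m g r (mem_T_of_mem_TIcc m g r hzT)
        omega
      · intro hz
        have hzsT : zs ∈ TIcc m g r zs := (mem_TIcc m g r h1 h2).mpr (T_self m g r zs)
        rw [hz]
        exact ⟨hzsT, by omega⟩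
    rw [hset, Finset.sum_singleton, Finset.sum_singleton]
    have hcn : cn m g r s X zs zs = (⌈SH m g r s X zs / g zs⌉₊ : ℝ) := by
      simp [cn]
    rw [hcn, max_eq_left hSHB]
  | succ n ih =>
    intro w hw
    have hih := ih (w + 1) (by omega)
    have hwlt : w < zs := by omega
    by_cases hmem : w ∈ TIcc m g r zs
    · have hsplitset : (TIcc m g r zs).filter (fun z => w ≤ z)
          = insert w ((TIcc m g r zs).filter (fun z => w + 1 ≤ z)) := by
        ext z
        simp only [Finset.mem_filter, Finset.mem_insert]
        constructor
        · rintro ⟨hz, hle⟩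
          rcases eq_or_lt_of_le hle with rfl | hlt'
          · exact Or.inl rfl
          · exact Or.inr ⟨hz, hlt'⟩
        · rintro (rfl | ⟨hz, hle⟩)
          · exact ⟨hmem, le_refl _⟩
          · exact ⟨hz, by omega⟩
      have hwnot : w ∉ (TIcc m g r zs).filter (fun z => w + 1 ≤ z) := by
        simp only [Finset.mem_filter]
        omega
      have hsplit : ∀ e : ℕ → ℝ,
          ∑ z ∈ (TIcc m g r zs).filter (fun z => w ≤ z), e z
            = e w + ∑ z ∈ (TIcc m g r zs).filter (fun z => w + 1 ≤ z), e z := by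
        intro e
        rw [hsplitset, Finset.sum_insert hwnot]
      have hwT : w ∈ T m g r zs := mem_T_of_mem_TIcc m g r hmem
      have hwne : w ≠ zs := by omega
      have hwb : 1 ≤ w ∧ w ≤ m := T_bounds m g r hwT h1 h2
      have hgw : 0 < g w := g_pos m g hg1 hg hwb.1 hwb.2
      set B := (⌈SH m g r s X zs / g zs⌉₊ : ℝ) * g zs with hB
      set Sge := ∑ z ∈ (TIcc m g r zs).filter (fun z => w ≤ z), SH m g r s X z with hSge
      set Sgt := ∑ z ∈ (TIcc m g r zs).filter (fun z => w + 1 ≤ z), SH m g r s X z with hSgt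
      have hfilter_lt : (TIcc m g r zs).filter (fun z => w < z)
          = (TIcc m g r zs).filter (fun z => w + 1 ≤ z) := by
        apply Finset.filter_congr
        intro z _
        omega
      have hSgeval : Sge = SH m g r s X w + Sgt := by
        rw [hSge, hSgt, hsplit]
      have hSHw : 0 ≤ SH m g r s X w := SH_nonneg m g r s hs0 w
      have hcnw : cn m g r s X zs w * g w
          = max (Sge - B) 0 - max (Sgt - B) 0 := by
        have hrw : cn m g r s X zs w
            = (if Sgt ≤ B ∧ B < Sge then (Sge - B) / g w
               else if B < Sgt then SH m g r s X w / g w else 0) := by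
          rw [cn]
          simp only [if_neg hwne, if_pos hwT, hfilter_lt, ← hB, ← hSge, ← hSgt]
        rw [hrw]
        by_cases hc1 : Sgt ≤ B ∧ B < Sge
        · rw [if_pos hc1, div_mul_cancel₀ _ (ne_of_gt hgw),
            max_eq_left (by linarith [hc1.2]), max_eq_right (by linarith [hc1.1])]
          ring
        · rw [if_neg hc1]
          by_cases hc2 : B < Sgt
          · have hge : B < Sge := by rw [hSgeval]; linarith
            rw [if_pos hc2, div_mul_cancel₀ _ (ne_of_gt hgw),
              max_eq_left (by linarith), max_eq_left (by linarith), hSgeval]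
            ring
          · push_neg at hc2
            have hge : Sge ≤ B := by
              by_contra hgt
              push_neg at hgt
              exact hc1 ⟨hc2, hgt⟩
            rw [if_neg (not_lt.mpr hc2), max_eq_right (by linarith : Sge - B ≤ 0),
              max_eq_right (by linarith : Sgt - B ≤ 0), zero_mul, sub_zero]
      rw [hsplit (fun z => cn m g r s X zs z * g z), hih, hcnw,
        max_sub_eq B Sge, max_sub_eq B Sgt]
      ring
    · have hfeq : (TIcc m g r zs).filter (fun z => w ≤ z)
          = (TIcc m g r zs).filter (fun z => w + 1 ≤ z) := by
        apply Finset.filter_congr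
        intro z hz
        constructor
        · intro h
          rcases eq_or_lt_of_le h with rfl | h'
          · exact absurd hz hmem
          · omega
        · omega
      rw [hfeq]
      exact hih

/-- Suffix-sum comparison implies weighted-sum comparison for monotone
nonnegative weights (Abel summation). -/
lemma abel_aux : ∀ (n : ℕ) (S : Finset ℕ) (c d ρ : ℕ → ℝ), S.card = n →
    (∀ z ∈ S, 0 ≤ ρ z) →
    (∀ z1 ∈ S, ∀ z2 ∈ S, z1 ≤ z2 → ρ z1 ≤ ρ z2) →
    (∀ w ∈ S, ∑ z ∈ S.filter (fun z => w ≤ z), c z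
        ≤ ∑ z ∈ S.filter (fun z => w ≤ z), d z) →
    ∑ z ∈ S, c z * ρ z ≤ ∑ z ∈ S, d z * ρ z := by
  intro n
  induction n with
  | zero =>
    intro S c d ρ hcard _ _ _
    rw [Finset.card_eq_zero.mp hcard]
    simp
  | succ n ih =>
    intro S c d ρ hcard h0 hmono hG
    have hne : S.Nonempty := Finset.card_pos.mp (by omega)
    set w0 := S.min' hne with hw0
    have hw0S : w0 ∈ S := S.min'_mem hne
    have hfull : S.filter (fun z => w0 ≤ z) = S :=
      Finset.filter_true_of_mem (fun z hz => S.min'_le z hz)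
    have hsum : ∀ e : ℕ → ℝ, ∑ z ∈ S, e z * ρ z
        = (∑ z ∈ S.erase w0, e z * (ρ z - ρ w0)) + ρ w0 * ∑ z ∈ S, e z := by
      intro e
      have h1 : ∑ z ∈ S, e z * ρ z
          = ∑ z ∈ S, (e z * (ρ z - ρ w0) + ρ w0 * e z) := by
        apply Finset.sum_congr rfl
        intro z _
        ring
      rw [h1, Finset.sum_add_distrib, ← Finset.mul_sum]
      congr 1
      rw [Finset.sum_erase S (by rw [sub_self, mul_zero])]
    have hcard' : (S.erase w0).card = n := by
      rw [Finset.card_erase_of_mem hw0S, hcard]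
      omega
    have hmain := ih (S.erase w0) c d (fun z => ρ z - ρ w0) hcard'
      (fun z hz => sub_nonneg.mpr
        (hmono w0 hw0S z (Finset.mem_of_mem_erase hz) (S.min'_le z (Finset.mem_of_mem_erase hz))))
      (fun z1 hz1 z2 hz2 h12 => sub_le_sub_right
        (hmono z1 (Finset.mem_of_mem_erase hz1) z2 (Finset.mem_of_mem_erase hz2) h12) _)
      (by
        intro w hw
        have hwS : w ∈ S := Finset.mem_of_mem_erase hw
        have hwne : w ≠ w0 := Finset.ne_of_mem_erase hw
        have hfe : (S.erase w0).filter (fun z => w ≤ z) = S.filter (fun z => w ≤ z) := by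
          rw [Finset.filter_erase]
          apply Finset.erase_eq_of_notMem
          simp only [Finset.mem_filter]
          intro hc
          have := S.min'_le w hwS
          omega
        rw [hfe]
        exact hG w hwS)
    have hlast : ρ w0 * ∑ z ∈ S, c z ≤ ρ w0 * ∑ z ∈ S, d z := by
      apply mul_le_mul_of_nonneg_left _ (h0 w0 hw0S)
      have := hG w0 hw0S
      rwa [hfull] at this
    rw [hsum c, hsum d]
    exact add_le_add hmain hlast

end sums

/-- Let `X ⊆ Y` be nonempty finite sets of jobs with sizes in
`(0, g m]`, `h0 := max{m(J) : J ∈ X}` and `k0 := max{m(J) : J ∈ Y}`.  Then for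
every `k1 ∈ P(k0)` there exists `h1 ∈ T(k1)` with `h0 ∈ A(h1)`, and for every
`z0 ∈ T(h1)`:
`∑_{z ∈ T(h1), z ≥ z0} cn^X_{h1}(z)·r z ≤ ∑_{z ∈ T(k1), z ≥ z0} cn^Y_{k1}(z)·r z`. -/
theorem statement_14 {ι : Type*} (m : ℕ) (g r : ℕ → ℝ) (s : ι → ℝ)
    (X Y : Finset ι)
    (hm : 1 ≤ m)
    (hg1 : 0 < g 1) (hr1 : 0 < r 1)
    (hg : ∀ i j, 1 ≤ i → i < j → j ≤ m → g i < g j)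
    (hr : ∀ i j, 1 ≤ i → i < j → j ≤ m → r i < r j)
    (hXY : X ⊆ Y) (hX : X.Nonempty) (hY : Y.Nonempty)
    (hs : ∀ J ∈ Y, 0 < s J ∧ s J ≤ g m) :
    ∀ k1 ∈ P m g r (k0f m g s Y),
      ∃ h1 ∈ T m g r k1, k0f m g s X ∈ A m g r h1 ∧
        ∀ z0 ∈ T m g r h1,
          (∑ z ∈ (TIcc m g r h1).filter (fun z => z0 ≤ z),
              cn m g r s X h1 z * r z)
            ≤ ∑ z ∈ (TIcc m g r k1).filter (fun z => z0 ≤ z),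
                cn m g r s Y k1 z * r z := by
  intro k1 hk1
  have hs0Y : ∀ J ∈ Y, 0 ≤ s J := fun J hJ => (hs J hJ).1.le
  have hs0X : ∀ J ∈ X, 0 ≤ s J := fun J hJ => hs0Y J (hXY hJ)
  have hmty : ∀ J ∈ Y, 1 ≤ mty m g s J ∧ mty m g s J ≤ m ∧ s J ≤ g (mty m g s J) :=
    fun J hJ => mty_spec m g s hm (hs J hJ).2
  have hk0m : k0f m g s Y ≤ m := Finset.sup_le (fun J hJ => (hmty J hJ).2.1)
  have hh0k0 : k0f m g s X ≤ k0f m g s Y := Finset.sup_mono hXY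
  have h1h0 : 1 ≤ k0f m g s X := by
    obtain ⟨J, hJ⟩ := hX
    exact le_trans (hmty J (hXY hJ)).1 (Finset.le_sup hJ)
  have h1k0 : 1 ≤ k0f m g s Y := h1h0.trans hh0k0
  have hk0k1 : k0f m g s Y ≤ k1 := le_of_mem_P m g r hk1
  have hk1m : k1 ≤ m := le_m_of_mem_P m g r hk0m hk1
  have h1k1 : 1 ≤ k1 := h1k0.trans hk0k1
  obtain ⟨h1, hh1T, hh1A⟩ := cover m g r (k1 - k0f m g s X) (k0f m g s X) k1 rfl
    h1h0 (hh0k0.trans hk0k1) hk1m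
  have hh1k1 : h1 ≤ k1 := T_le m g r hh1T
  obtain ⟨h1h1, hh1m⟩ := T_bounds m g r hh1T h1k1 hk1m
  have hgh1 : 0 < g h1 := g_pos m g hg1 hg h1h1 hh1m
  have hgk1 : 0 < g k1 := g_pos m g hg1 hg h1k1 hk1m
  refine ⟨h1, hh1T, hh1A, ?_⟩
  have hSHXY : ∀ z, SH m g r s X z ≤ SH m g r s Y z := SH_mono m g r s hXY hs0Y
  have hSHY0 : ∀ z, 0 ≤ SH m g r s Y z := SH_nonneg m g r s hs0Y
  have hSHX0 : ∀ z, 0 ≤ SH m g r s X z := SH_nonneg m g r s hs0X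
  have hGX : ∀ w, w ≤ h1 →
      ∑ z ∈ (TIcc m g r h1).filter (fun z => w ≤ z), cn m g r s X h1 z * g z
        = max ((⌈SH m g r s X h1 / g h1⌉₊ : ℝ) * g h1)
              (∑ z ∈ (TIcc m g r h1).filter (fun z => w ≤ z), SH m g r s X z) :=
    fun w hwle => Gmax_aux m g r s hg1 hg hs0X h1h1 hh1m (h1 - w) w (by omega)
  have hGY : ∀ w, w ≤ k1 →
      ∑ z ∈ (TIcc m g r k1).filter (fun z => w ≤ z), cn m g r s Y k1 z * g z
        = max ((⌈SH m g r s Y k1 / g k1⌉₊ : ℝ) * g k1)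
              (∑ z ∈ (TIcc m g r k1).filter (fun z => w ≤ z), SH m g r s Y z) :=
    fun w hwle => Gmax_aux m g r s hg1 hg hs0Y h1k1 hk1m (k1 - w) w (by omega)
  have hTsub := T_subset m g r hh1T
  have hTIccsub : TIcc m g r h1 ⊆ TIcc m g r k1 := by
    intro z hz
    exact (mem_TIcc m g r h1k1 hk1m).mpr (hTsub (mem_T_of_mem_TIcc m g r hz))
  -- the key bound on the X-side ceiling term
  have hBX : ∀ w, w ≤ h1 →
      (⌈SH m g r s X h1 / g h1⌉₊ : ℝ) * g h1
        ≤ max ((⌈SH m g r s Y k1 / g k1⌉₊ : ℝ) * g k1)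
              (∑ z ∈ (TIcc m g r k1).filter (fun z => w ≤ z), SH m g r s Y z) := by
    intro w hwle
    by_cases heq : h1 = k1
    · rw [heq]
      refine le_trans ?_ (le_max_left _ _)
      have hceil : ⌈SH m g r s X k1 / g k1⌉₊ ≤ ⌈SH m g r s Y k1 / g k1⌉₊ :=
        Nat.ceil_mono ((div_le_div_iff_of_pos_right hgk1).mpr (hSHXY k1))
      exact mul_le_mul_of_nonneg_right (Nat.cast_le.mpr hceil) hgk1.le
    · have hlt : h1 < k1 := lt_of_le_of_ne hh1k1 heq
      refine le_trans ?_ (le_max_right _ _)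
      -- the job attaining the max type of Y
      obtain ⟨J0, hJ0Y, hJ0⟩ := Finset.exists_mem_eq_sup Y hY (fun J => mty m g s J)
      have hJ0' : k0f m g s Y = mty m g s J0 := hJ0
      obtain ⟨b, hbP, hby⟩ : ∃ b ∈ P m g r k1, h1 ∈ y m g r b := by
        rcases (mem_T_iff m g r).mp hh1T with heq' | h
        · exact absurd heq' heq
        · exact h
      have hbPk0 : b ∈ P m g r (k0f m g s Y) := P_trans m g r hk1 hbP
      have hh1k0 : h1 < k0f m g s Y := y_lt m g r hby hbPk0
      have hsJ0 : g h1 < s J0 := by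
        by_contra hle
        push_neg at hle
        have := mty_min m g s h1h1 hh1m hle
        omega
      have hJ0H : J0 ∈ H m g r s k1 Y := by
        refine Finset.mem_filter.mpr ⟨hJ0Y, ?_⟩
        rw [← hJ0']
        exact ⟨h1k0, hk0m, hk1⟩
      have hs_le : s J0 ≤ SH m g r s Y k1 := by
        unfold SH Ssum
        exact Finset.single_le_sum
          (fun J hJ => hs0Y J (Finset.mem_filter.mp hJ).1) hJ0H
      have hSHk1 : g h1 < SH m g r s Y k1 := lt_of_lt_of_le hsJ0 hs_le
      have hpair : SH m g r s Y h1 + SH m g r s Y k1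
          ≤ ∑ z ∈ (TIcc m g r k1).filter (fun z => w ≤ z), SH m g r s Y z := by
        have hsub : ({h1, k1} : Finset ℕ) ⊆ (TIcc m g r k1).filter (fun z => w ≤ z) := by
          intro z hz
          simp only [Finset.mem_insert, Finset.mem_singleton] at hz
          rcases hz with rfl | rfl
          · exact Finset.mem_filter.mpr
              ⟨hTIccsub ((mem_TIcc m g r h1h1 hh1m).mpr (T_self m g r z)), hwle⟩
          · exact Finset.mem_filter.mpr
              ⟨(mem_TIcc m g r h1k1 hk1m).mpr (T_self m g r z), by omega⟩
        have hps : SH m g r s Y h1 + SH m g r s Y k1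
            = ∑ z ∈ ({h1, k1} : Finset ℕ), SH m g r s Y z :=
          (Finset.sum_pair (ne_of_lt hlt)).symm
        rw [hps]
        exact Finset.sum_le_sum_of_subset_of_nonneg hsub (fun z _ _ => hSHY0 z)
      have hceil : (⌈SH m g r s X h1 / g h1⌉₊ : ℝ) * g h1 < SH m g r s X h1 + g h1 := by
        have h := Nat.ceil_lt_add_one (div_nonneg (hSHX0 h1) hgh1.le)
        have h2 := mul_lt_mul_of_pos_right h hgh1
        rwa [add_mul, one_mul, div_mul_cancel₀ _ (ne_of_gt hgh1)] at h2
      have := hSHXY h1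
      linarith
  -- comparison of the g-weighted suffix sums
  have hGcomp : ∀ w : ℕ,
      (∑ z ∈ (TIcc m g r h1).filter (fun z => w ≤ z), cn m g r s X h1 z * g z)
        ≤ ∑ z ∈ (TIcc m g r k1).filter (fun z => w ≤ z), cn m g r s Y k1 z * g z := by
    intro w
    by_cases hwh : w ≤ h1
    · rw [hGX w hwh, hGY w (hwh.trans hh1k1)]
      apply max_le
      · exact hBX w hwh
      · refine le_trans ?_ (le_max_right _ _)
        refine le_trans (Finset.sum_le_sum (fun z _ => hSHXY z)) ?_
        exact Finset.sum_le_sum_of_subset_of_nonneg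
          (Finset.filter_subset_filter _ hTIccsub) (fun z _ _ => hSHY0 z)
    · push_neg at hwh
      have hLHS : (TIcc m g r h1).filter (fun z => w ≤ z) = ∅ := by
        apply Finset.filter_eq_empty_iff.mpr
        intro z hz
        have := T_le m g r (mem_T_of_mem_TIcc m g r hz)
        omega
      rw [hLHS, Finset.sum_empty]
      by_cases hwk : w ≤ k1
      · rw [hGY w hwk]
        refine le_trans ?_ (le_max_left _ _)
        exact mul_nonneg (Nat.cast_nonneg _) hgk1.le
      · have hRHS : (TIcc m g r k1).filter (fun z => w ≤ z) = ∅ := by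
          apply Finset.filter_eq_empty_iff.mpr
          intro z hz
          have := T_le m g r (mem_T_of_mem_TIcc m g r hz)
          omega
        rw [hRHS, Finset.sum_empty]
  intro z0 hz0
  have hsetEq : ∀ w : ℕ,
      ((TIcc m g r k1).filter (fun z => w ≤ z)).filter (fun z => z ∈ T m g r h1)
        = (TIcc m g r h1).filter (fun z => w ≤ z) := by
    intro w
    ext z
    simp only [Finset.mem_filter]
    constructor
    · rintro ⟨⟨hzk, hwz⟩, hzT⟩
      exact ⟨(mem_TIcc m g r h1h1 hh1m).mpr hzT, hwz⟩
    · rintro ⟨hz, hwz⟩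
      exact ⟨⟨hTIccsub hz, hwz⟩, mem_T_of_mem_TIcc m g r hz⟩
  have hcsum : ∀ w : ℕ,
      ∑ z ∈ (TIcc m g r k1).filter (fun z => w ≤ z),
        (if z ∈ T m g r h1 then cn m g r s X h1 z * g z else 0)
      = ∑ z ∈ (TIcc m g r h1).filter (fun z => w ≤ z), cn m g r s X h1 z * g z := by
    intro w
    rw [← hsetEq w]
    exact (Finset.sum_filter _ _).symm
  set S := (TIcc m g r k1).filter (fun z => z0 ≤ z) with hS
  have hbounds : ∀ z ∈ S, 1 ≤ z ∧ z ≤ m := fun z hz =>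
    T_bounds m g r (mem_T_of_mem_TIcc m g r (Finset.mem_filter.mp hz).1) h1k1 hk1m
  have hρ0 : ∀ z ∈ S, 0 ≤ r z / g z := by
    intro z hz
    obtain ⟨hz1, hz2⟩ := hbounds z hz
    exact div_nonneg (g_pos m r hr1 hr hz1 hz2).le (g_pos m g hg1 hg hz1 hz2).le
  have hρmono : ∀ z1 ∈ S, ∀ z2 ∈ S, z1 ≤ z2 → r z1 / g z1 ≤ r z2 / g z2 := by
    intro z1 hz1 z2 hz2 h12
    rcases eq_or_lt_of_le h12 with rfl | hlt
    · exact le_refl _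
    · exact rho_mono_T m g r hk1m
        (mem_T_of_mem_TIcc m g r (Finset.mem_filter.mp hz1).1)
        (mem_T_of_mem_TIcc m g r (Finset.mem_filter.mp hz2).1) hlt
  have hGS : ∀ w ∈ S,
      ∑ z ∈ S.filter (fun z => w ≤ z),
        (if z ∈ T m g r h1 then cn m g r s X h1 z * g z else 0)
      ≤ ∑ z ∈ S.filter (fun z => w ≤ z), cn m g r s Y k1 z * g z := by
    intro w hw
    have hz0w : z0 ≤ w := (Finset.mem_filter.mp hw).2
    have hff : S.filter (fun z => w ≤ z) = (TIcc m g r k1).filter (fun z => w ≤ z) := by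
      rw [hS, Finset.filter_filter]
      apply Finset.filter_congr
      intro z _
      constructor
      · exact fun h => h.2
      · exact fun h => ⟨by omega, h⟩
    rw [hff, hcsum w]
    exact hGcomp w
  have habel := abel_aux S.card S
    (fun z => if z ∈ T m g r h1 then cn m g r s X h1 z * g z else 0)
    (fun z => cn m g r s Y k1 z * g z)
    (fun z => r z / g z) rfl hρ0 hρmono hGS
  have hLHSeq : ∑ z ∈ S,
      (if z ∈ T m g r h1 then cn m g r s X h1 z * g z else 0) * (r z / g z)
      = ∑ z ∈ (TIcc m g r h1).filter (fun z => z0 ≤ z), cn m g r s X h1 z * r z := by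
    have e1 : ∀ z ∈ S,
        (if z ∈ T m g r h1 then cn m g r s X h1 z * g z else 0) * (r z / g z)
        = if z ∈ T m g r h1 then cn m g r s X h1 z * (g z * (r z / g z)) else 0 := by
      intro z hz
      split
      · ring
      · rw [zero_mul]
    rw [Finset.sum_congr rfl e1, ← Finset.sum_filter, hS, hsetEq z0]
    apply Finset.sum_congr rfl
    intro z hz
    have hb := T_bounds m g r (mem_T_of_mem_TIcc m g r (Finset.mem_filter.mp hz).1) h1h1 hh1m
    have hgz : g z ≠ 0 := ne_of_gt (g_pos m g hg1 hg hb.1 hb.2)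
    rw [mul_comm (g z), div_mul_cancel₀ _ hgz]
  have hRHSeq : ∑ z ∈ S, (cn m g r s Y k1 z * g z) * (r z / g z)
      = ∑ z ∈ S, cn m g r s Y k1 z * r z := by
    apply Finset.sum_congr rfl
    intro z hz
    obtain ⟨hz1, hz2⟩ := hbounds z hz
    have hgz : g z ≠ 0 := ne_of_gt (g_pos m g hg1 hg hz1 hz2)
    rw [mul_assoc, mul_comm (g z), div_mul_cancel₀ _ hgz]
  rw [← hLHSeq, ← hRHSeq]
  exact habel


end BSHM
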